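/- Let (R,q) be a non-singular 2m-dimensional quadratic space of plus type over F_2, and let (R^3, q^3) denote the orthogonal direct sum of three copies. Let S_1, S_2, P, Q, T, U and an isomorphism φ: T → U be as in the construction 𝒮(S_1,S_2,P,Q,T,φ) (with m-k_1-k_2 even). Then the subspace 𝒮 = Span{(s_1,0,0), (0,s_2,0), (p,p,0), (q,0,q), (0,t,φ(t)) : s_i ∈ S_i, p ∈ P, q ∈ Q, t ∈ T} of R^3 is a maximal totally singular subspace, i.e., totally singular of dimension 3m. -/

import Mathlib

open QuadraticMap Module Submodule

section
variable {R : Type*} [AddCommGroup R] [Module (ZMod 2) R]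

def IsTotallySingular (Q : QuadraticForm (ZMod 2) R) (S : Submodule (ZMod 2) R) : Prop :=
  ∀ x ∈ S, Q x = 0

def QuadNonsingular (Q : QuadraticForm (ZMod 2) R) : Prop :=
  ∀ a : R, (∀ b : R, polar Q a b = 0) → a = 0

def IsPlusType (Q : QuadraticForm (ZMod 2) R) (m : ℕ) : Prop :=
  (∃ S : Submodule (ZMod 2) R, IsTotallySingular Q S ∧ Module.finrank (ZMod 2) S = m) ∧
  ∀ S : Submodule (ZMod 2) R, IsTotallySingular Q S → Module.finrank (ZMod 2) S ≤ m

def orthComp (Q : QuadraticForm (ZMod 2) R) (A : Submodule (ZMod 2) R) :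
    Submodule (ZMod 2) R where
  carrier := {x | ∀ a ∈ A, polar Q x a = 0}
  add_mem' := fun hx hy a ha => by
    rw [polar_add_left, hx a ha, hy a ha, add_zero]
  zero_mem' := fun a ha => by simp [polar]
  smul_mem' := fun c x hx a ha => by
    rw [polar_smul_left, hx a ha, smul_zero]

def NonsingularOn (Q : QuadraticForm (ZMod 2) R) (A : Submodule (ZMod 2) R) : Prop :=
  ∀ x ∈ A, (∀ y ∈ A, polar Q x y = 0) → x = 0

end

section
variable {R : Type*} [AddCommGroup R] [Module (ZMod 2) R]

/-- The data of the construction 𝒮(S₁,S₂,P,Q,T,φ) of Theorem 4.1 (m - k₁ - k₂ even):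
S₁ is a k₁-dimensional totally singular subspace, S₂ ⊆ S₁ is k₂-dimensional,
P is an (m-k₁-k₂)-dimensional non-singular subspace of S₁^⊥, Q is a complement of S₁ in
(S₁ ⊥ P)^⊥, T is a complement of S₂ in (S₂ ⊥ P)^⊥, and φ : T → U = Q^⊥ is an isomorphism
of quadratic spaces. -/
def EvenConstruction (Q : QuadraticForm (ZMod 2) R) (m k1 k2 : ℕ)
    (S1 S2 P Qs T : Submodule (ZMod 2) R) (φ : R →ₗ[ZMod 2] R) : Prop :=
  IsTotallySingular Q S1 ∧ Module.finrank (ZMod 2) S1 = k1 ∧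
  S2 ≤ S1 ∧ Module.finrank (ZMod 2) S2 = k2 ∧
  k1 + k2 ≤ m ∧ Even (m - k1 - k2) ∧
  P ≤ orthComp Q S1 ∧ NonsingularOn Q P ∧ Module.finrank (ZMod 2) P = m - k1 - k2 ∧
  Disjoint S1 Qs ∧ S1 ⊔ Qs = orthComp Q (S1 ⊔ P) ∧
  Disjoint S2 T ∧ S2 ⊔ T = orthComp Q (S2 ⊔ P) ∧
  (∀ x ∈ T, Q (φ x) = Q x) ∧ Set.InjOn φ (T : Set R) ∧
  Submodule.map φ T = orthComp Q Qs

/-- The subspace 𝒮(S₁,S₂,P,Q,T,φ) of R³. -/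
def SpanEven (S1 S2 P Qs T : Submodule (ZMod 2) R) (φ : R →ₗ[ZMod 2] R) :
    Submodule (ZMod 2) (Fin 3 → R) :=
  Submodule.span (ZMod 2)
    ({w | ∃ s ∈ S1, w = ![s, 0, 0]} ∪ {w | ∃ s ∈ S2, w = ![0, s, 0]} ∪
     {w | ∃ p ∈ P, w = ![p, p, 0]} ∪ {w | ∃ q ∈ Qs, w = ![q, 0, q]} ∪
     {w | ∃ t ∈ T, w = ![0, t, φ t]})

end

section MyAux
variable {R : Type*} [AddCommGroup R] [Module (ZMod 2) R]

theorem my_mem_orthComp {Q : QuadraticForm (ZMod 2) R} {A : Submodule (ZMod 2) R} {x : R} :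
    x ∈ orthComp Q A ↔ ∀ a ∈ A, polar Q x a = 0 := Iff.rfl

/-- The quadratic form on three copies, as a plain function. -/
def F3 (Q : QuadraticForm (ZMod 2) R) (v : Fin 3 → R) : ZMod 2 := Q (v 0) + Q (v 1) + Q (v 2)

/-- The polar form of `F3`. -/
def B3 (Q : QuadraticForm (ZMod 2) R) (v w : Fin 3 → R) : ZMod 2 :=
  polar Q (v 0) (w 0) + polar Q (v 1) (w 1) + polar Q (v 2) (w 2)

theorem B3_explicit (Q : QuadraticForm (ZMod 2) R) (a b c d e f : R) :
    B3 Q ![a, b, c] ![d, e, f] = polar Q a d + polar Q b e + polar Q c f := rfl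

theorem F3_explicit (Q : QuadraticForm (ZMod 2) R) (a b c : R) :
    F3 Q ![a, b, c] = Q a + Q b + Q c := rfl

theorem F3_add (Q : QuadraticForm (ZMod 2) R) (v w : Fin 3 → R) :
    F3 Q (v + w) = F3 Q v + F3 Q w + B3 Q v w := by
  simp only [F3, B3, polar, Pi.add_apply]
  ring

theorem my_finrank_orthComp [FiniteDimensional (ZMod 2) R] (Q : QuadraticForm (ZMod 2) R)
    (hns : QuadNonsingular Q) (A : Submodule (ZMod 2) R) :
    finrank (ZMod 2) (orthComp Q A) = finrank (ZMod 2) R - finrank (ZMod 2) A := by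
  have hrefl : LinearMap.BilinForm.IsRefl (polarBilin Q) := by
    intro x y hxy
    simp only [polarBilin_apply_apply] at *
    rwa [polar_comm]
  have hnd : LinearMap.BilinForm.Nondegenerate (polarBilin Q) := by
    refine (LinearMap.IsRefl.nondegenerate_iff_separatingLeft hrefl).mpr ?_
    intro a ha
    exact hns a fun b => by simpa using ha b
  have heq : orthComp Q A = LinearMap.BilinForm.orthogonal (polarBilin Q) A := by
    ext x
    simp only [my_mem_orthComp, LinearMap.BilinForm.mem_orthogonal_iff,
      LinearMap.BilinForm.isOrtho_def, polarBilin_apply_apply]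
    constructor
    · intro hx n hn; rw [polar_comm]; exact hx n hn
    · intro hx a ha; rw [polar_comm]; exact hx a ha
  rw [heq, LinearMap.BilinForm.finrank_orthogonal hnd]

/-- The parametrization of 𝒮 by S₁ × S₂ × P × Q × T. -/
def PsiMap (S1 S2 P Qs T : Submodule (ZMod 2) R) (φ : R →ₗ[ZMod 2] R) :
    (S1 × S2 × P × Qs × T) →ₗ[ZMod 2] (Fin 3 → R) where
  toFun x := ![(x.1 : R) + x.2.2.1 + x.2.2.2.1,
               (x.2.1 : R) + x.2.2.1 + x.2.2.2.2,
               (x.2.2.2.1 : R) + φ x.2.2.2.2]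
  map_add' x y := by
    funext i
    fin_cases i <;> simp <;> abel
  map_smul' c x := by
    funext i
    fin_cases i <;> simp [smul_add]

end MyAux

set_option maxHeartbeats 4000000 in
/-- 𝒮(S₁,S₂,P,Q,T,φ) is a maximal totally singular subspace of (R³, q³), i.e. it is
totally singular of dimension 3m. -/
theorem spanEven_maximal_totally_singular {R : Type*} [AddCommGroup R] [Module (ZMod 2) R]
    [FiniteDimensional (ZMod 2) R] (m k1 k2 : ℕ)
    (Q : QuadraticForm (ZMod 2) R) (hdim : Module.finrank (ZMod 2) R = 2 * m)
    (hns : QuadNonsingular Q) (htype : IsPlusType Q m)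
    (S1 S2 P Qs T : Submodule (ZMod 2) R) (φ : R →ₗ[ZMod 2] R)
    (h : EvenConstruction Q m k1 k2 S1 S2 P Qs T φ) :
    (∀ v ∈ SpanEven S1 S2 P Qs T φ, Q (v 0) + Q (v 1) + Q (v 2) = 0) ∧
    Module.finrank (ZMod 2) (SpanEven S1 S2 P Qs T φ) = 3 * m := by
  obtain ⟨hS1ts, hk1, hS21, hk2, hkm, -, hPle, hPns, hPdim, hdisjQ, hQsup, hdisjT, hTsup,
    hφq, hφinj, hφmap⟩ := h
  have h2 : ∀ a : ZMod 2, a + a = 0 := by decide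
  -- basic orthogonality facts
  have hpol1 : ∀ x ∈ S1, ∀ y ∈ S1, polar Q x y = 0 := by
    intro x hx y hy
    simp [polar, hS1ts _ (add_mem hx hy), hS1ts _ hx, hS1ts _ hy]
  have hPS1 : ∀ p ∈ P, ∀ s ∈ S1, polar Q p s = 0 := fun p hp => hPle hp
  have hS1P : ∀ s ∈ S1, ∀ p ∈ P, polar Q s p = 0 := fun s hs p hp =>
    (polar_comm _ s p).trans (hPS1 p hp s hs)
  have hQorth : ∀ q ∈ Qs, ∀ a ∈ S1 ⊔ P, polar Q q a = 0 := by
    intro q hq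
    have : q ∈ orthComp Q (S1 ⊔ P) := hQsup ▸ Submodule.mem_sup_right hq
    exact this
  have hTorth : ∀ t ∈ T, ∀ a ∈ S2 ⊔ P, polar Q t a = 0 := by
    intro t ht
    have : t ∈ orthComp Q (S2 ⊔ P) := hTsup ▸ Submodule.mem_sup_right ht
    exact this
  have hφQ : ∀ t ∈ T, ∀ q ∈ Qs, polar Q (φ t) q = 0 := by
    intro t ht
    have : φ t ∈ orthComp Q Qs := hφmap ▸ Submodule.mem_map_of_mem ht
    exact this
  have hφpol : ∀ t ∈ T, ∀ u ∈ T, polar Q (φ t) (φ u) = polar Q t u := by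
    intro t ht u hu
    simp only [polar, ← map_add]
    rw [hφq _ (add_mem ht hu), hφq _ ht, hφq _ hu]
  set G : Set (Fin 3 → R) :=
    ({w | ∃ s ∈ S1, w = ![s, 0, 0]} ∪ {w | ∃ s ∈ S2, w = ![0, s, 0]} ∪
     {w | ∃ p ∈ P, w = ![p, p, 0]} ∪ {w | ∃ q ∈ Qs, w = ![q, 0, q]} ∪
     {w | ∃ t ∈ T, w = ![0, t, φ t]}) with hG
  -- pairwise B3-orthogonality of generators
  have hBgen : ∀ x ∈ G, ∀ y ∈ G, B3 Q x y = 0 := by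
    rintro x ((((⟨s, hs, rfl⟩ | ⟨s, hs, rfl⟩) | ⟨p, hp, rfl⟩) | ⟨q, hq, rfl⟩) | ⟨t, ht, rfl⟩) y
      ((((⟨s', hs', rfl⟩ | ⟨s', hs', rfl⟩) | ⟨p', hp', rfl⟩) | ⟨q', hq', rfl⟩) | ⟨t', ht', rfl⟩) <;>
      rw [B3_explicit]
    · simp [polar_zero_left, polar_zero_right, hpol1 _ hs _ hs']
    · simp [polar_zero_left, polar_zero_right]
    · simp [polar_zero_left, polar_zero_right, hS1P _ hs _ hp']
    · simp [polar_zero_left, polar_zero_right,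
        (polar_comm _ s q').trans (hQorth _ hq' _ (Submodule.mem_sup_left hs))]
    · simp [polar_zero_left, polar_zero_right]
    · simp [polar_zero_left, polar_zero_right]
    · simp [polar_zero_left, polar_zero_right, hpol1 _ (hS21 hs) _ (hS21 hs')]
    · simp [polar_zero_left, polar_zero_right, hS1P _ (hS21 hs) _ hp']
    · simp [polar_zero_left, polar_zero_right]
    · simp [polar_zero_left, polar_zero_right,
        (polar_comm _ s t').trans (hTorth _ ht' _ (Submodule.mem_sup_left hs))]
    · simp [polar_zero_left, polar_zero_right, hPS1 _ hp _ hs']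
    · simp [polar_zero_left, polar_zero_right, hPS1 _ hp _ (hS21 hs')]
    · simp only [polar_zero_left, polar_zero_right, add_zero]
      exact h2 _
    · simp [polar_zero_left, polar_zero_right,
        (polar_comm _ p q').trans (hQorth _ hq' _ (Submodule.mem_sup_right hp))]
    · simp [polar_zero_left, polar_zero_right,
        (polar_comm _ p t').trans (hTorth _ ht' _ (Submodule.mem_sup_right hp))]
    · simp [polar_zero_left, polar_zero_right, hQorth _ hq _ (Submodule.mem_sup_left hs')]
    · simp [polar_zero_left, polar_zero_right]
    · simp [polar_zero_left, polar_zero_right, hQorth _ hq _ (Submodule.mem_sup_right hp')]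
    · simp only [polar_zero_left, polar_zero_right, add_zero]
      exact h2 _
    · simp [polar_zero_left, polar_zero_right, (polar_comm _ q (φ t')).trans (hφQ _ ht' _ hq)]
    · simp [polar_zero_left, polar_zero_right]
    · simp [polar_zero_left, polar_zero_right, hTorth _ ht _ (Submodule.mem_sup_left hs')]
    · simp [polar_zero_left, polar_zero_right, hTorth _ ht _ (Submodule.mem_sup_right hp')]
    · simp [polar_zero_left, polar_zero_right, hφQ _ ht _ hq']
    · simp only [polar_zero_left, polar_zero_right, zero_add]
      rw [hφpol _ ht _ ht']
      exact h2 _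
  -- B3-orthogonality on the span
  have hBspan : ∀ v ∈ Submodule.span (ZMod 2) G, ∀ w ∈ Submodule.span (ZMod 2) G,
      B3 Q v w = 0 := by
    intro v hv w hw
    refine Submodule.span_induction₂ (p := fun x y _ _ => B3 Q x y = 0) (fun x y hx hy => hBgen x hx y hy) ?_ ?_ ?_ ?_ ?_ ?_
      hv hw
    · intro y _; simp [B3, polar_zero_left]
    · intro x _; simp [B3, polar_zero_right]
    · intro x y z _ _ _ h1 h2'
      simp only [B3, Pi.add_apply, polar_add_left] at *
      linear_combination h1 + h2'
    · intro x y z _ _ _ h1 h2'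
      simp only [B3, Pi.add_apply, polar_add_right] at *
      linear_combination h1 + h2'
    · intro r x y _ _ h1
      simp only [B3, Pi.smul_apply, polar_smul_left, smul_eq_mul] at *
      linear_combination r * h1
    · intro r x y _ _ h1
      simp only [B3, Pi.smul_apply, polar_smul_right, smul_eq_mul] at *
      linear_combination r * h1
  -- total singularity
  have hF : ∀ v ∈ Submodule.span (ZMod 2) G, F3 Q v = 0 := by
    intro v hv
    induction hv using Submodule.span_induction with
    | mem x hx =>
      rcases hx with (((⟨s, hs, rfl⟩ | ⟨s, hs, rfl⟩) | ⟨p, hp, rfl⟩) | ⟨q, hq, rfl⟩) |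
        ⟨t, ht, rfl⟩ <;> rw [F3_explicit]
      · simp [hS1ts _ hs]
      · simp [hS1ts _ (hS21 hs)]
      · simp only [map_zero, add_zero]; exact h2 _
      · simp only [map_zero, add_zero, zero_add]; exact h2 _
      · simp only [map_zero, zero_add]; rw [hφq _ ht]; exact h2 _
    | zero => simp [F3]
    | add x y hx hy ihx ihy =>
      rw [F3_add, ihx, ihy, hBspan x hx y hy]
      simp
    | smul a x hx ih =>
      simp only [F3, Pi.smul_apply, QuadraticMap.map_smul, smul_eq_mul] at *
      linear_combination (a * a) * ih
  have hSpanG : SpanEven S1 S2 P Qs T φ = Submodule.span (ZMod 2) G := rfl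
  constructor
  · intro v hv
    exact hF v (hSpanG ▸ hv)
  -- dimension count
  · set Ψ := PsiMap S1 S2 P Qs T φ with hΨ
    have hrange : LinearMap.range Ψ = SpanEven S1 S2 P Qs T φ := by
      apply le_antisymm
      · rintro w ⟨⟨a, b, c, d, e⟩, rfl⟩
        have hw : Ψ (a, b, c, d, e) =
            ![(a : R), 0, 0] + ![0, (b : R), 0] + ![(c : R), c, 0] + ![(d : R), 0, d] +
              ![0, (e : R), φ e] := by
          funext i
          fin_cases i <;> simp [hΨ, PsiMap] <;> abel
        rw [hw]
        refine add_mem (add_mem (add_mem (add_mem (Submodule.subset_span ?_)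
          (Submodule.subset_span ?_)) (Submodule.subset_span ?_)) (Submodule.subset_span ?_))
          (Submodule.subset_span ?_)
        · exact Or.inl (Or.inl (Or.inl (Or.inl ⟨a, a.2, rfl⟩)))
        · exact Or.inl (Or.inl (Or.inl (Or.inr ⟨b, b.2, rfl⟩)))
        · exact Or.inl (Or.inl (Or.inr ⟨c, c.2, rfl⟩))
        · exact Or.inl (Or.inr ⟨d, d.2, rfl⟩)
        · exact Or.inr ⟨e, e.2, rfl⟩
      · rw [SpanEven]
        apply Submodule.span_le.mpr
        rintro w ((((⟨s, hs, rfl⟩ | ⟨s, hs, rfl⟩) | ⟨p, hp, rfl⟩) | ⟨q, hq, rfl⟩) | ⟨t, ht, rfl⟩)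
        · exact ⟨(⟨s, hs⟩, 0, 0, 0, 0), by funext i; fin_cases i <;> simp [hΨ, PsiMap]⟩
        · exact ⟨(0, ⟨s, hs⟩, 0, 0, 0), by funext i; fin_cases i <;> simp [hΨ, PsiMap]⟩
        · exact ⟨(0, 0, ⟨p, hp⟩, 0, 0), by funext i; fin_cases i <;> simp [hΨ, PsiMap]⟩
        · exact ⟨(0, 0, 0, ⟨q, hq⟩, 0), by funext i; fin_cases i <;> simp [hΨ, PsiMap]⟩
        · exact ⟨(0, 0, 0, 0, ⟨t, ht⟩), by funext i; fin_cases i <;> simp [hΨ, PsiMap]⟩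
    have hinj : Function.Injective Ψ := by
      rw [← LinearMap.ker_eq_bot, eq_bot_iff]
      rintro ⟨a, b, c, d, e⟩ hx
      rw [LinearMap.mem_ker] at hx
      have e0 : (a : R) + c + d = 0 := congrFun hx 0
      have e1 : (b : R) + c + e = 0 := congrFun hx 1
      have e2 : (d : R) + φ e = 0 := congrFun hx 2
      have hc : (c : R) = 0 := by
        refine hPns c c.2 fun y hy => ?_
        have hc' : (c : R) = -((a : R) + d) := by
          refine eq_neg_of_add_eq_zero_left ?_
          rw [← e0]; abel
        rw [hc', polar_neg_left, polar_add_left, hS1P _ a.2 y hy,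
          hQorth _ d.2 y (Submodule.mem_sup_right hy)]
        simp
      have ha0 : (a : R) = 0 := by
        have haq : (a : R) ∈ Qs := by
          have : (a : R) = -(d : R) := by
            refine eq_neg_of_add_eq_zero_left ?_
            rw [← e0, hc]; abel
          rw [this]
          exact neg_mem d.2
        exact Submodule.disjoint_def.mp hdisjQ _ a.2 haq
      have hd0 : (d : R) = 0 := by
        have := e0
        rw [ha0, hc, zero_add, zero_add] at this
        exact this
      have he0 : (e : R) = 0 := by
        have hφe : φ (e : R) = 0 := by
          have := e2
          rwa [hd0, zero_add] at this
        exact hφinj e.2 T.zero_mem (by rw [hφe, map_zero])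
      have hb0 : (b : R) = 0 := by
        have := e1
        rw [hc, he0, add_zero, add_zero] at this
        exact this
      simp [Submodule.mem_bot, Prod.ext_iff, Subtype.ext_iff, ha0, hb0, hc, hd0, he0]
    -- dimension computations
    have hdisj1 : Disjoint S1 P := by
      rw [Submodule.disjoint_def]
      intro x hx1 hxP
      exact hPns x hxP fun y hy => (polar_comm _ x y).trans (hPS1 y hy x hx1)
    have hdisj2 : Disjoint S2 P := by
      rw [Submodule.disjoint_def]
      intro x hx2 hxP
      exact hPns x hxP fun y hy => (polar_comm _ x y).trans (hPS1 y hy x (hS21 hx2))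
    have hsum1 : finrank (ZMod 2) ↥(S1 ⊔ P) = k1 + (m - k1 - k2) := by
      have := Submodule.finrank_sup_add_finrank_inf_eq S1 P
      rw [hdisj1.eq_bot, finrank_bot, hk1, hPdim, add_zero] at this
      exact this
    have hsum2 : finrank (ZMod 2) ↥(S2 ⊔ P) = k2 + (m - k1 - k2) := by
      have := Submodule.finrank_sup_add_finrank_inf_eq S2 P
      rw [hdisj2.eq_bot, finrank_bot, hk2, hPdim, add_zero] at this
      exact this
    have hQdim : finrank (ZMod 2) ↥(S1 ⊔ Qs) = k1 + finrank (ZMod 2) Qs := by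
      have := Submodule.finrank_sup_add_finrank_inf_eq S1 Qs
      rw [hdisjQ.eq_bot, finrank_bot, hk1, add_zero] at this
      exact this
    have hTdim : finrank (ZMod 2) ↥(S2 ⊔ T) = k2 + finrank (ZMod 2) T := by
      have := Submodule.finrank_sup_add_finrank_inf_eq S2 T
      rw [hdisjT.eq_bot, finrank_bot, hk2, add_zero] at this
      exact this
    have horth1 : finrank (ZMod 2) ↥(S1 ⊔ Qs) = 2 * m - (k1 + (m - k1 - k2)) := by
      rw [hQsup, my_finrank_orthComp Q hns, hdim, hsum1]
    have horth2 : finrank (ZMod 2) ↥(S2 ⊔ T) = 2 * m - (k2 + (m - k1 - k2)) := by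
      rw [hTsup, my_finrank_orthComp Q hns, hdim, hsum2]
    have hfin : finrank (ZMod 2) ↥(SpanEven S1 S2 P Qs T φ) =
        k1 + (k2 + ((m - k1 - k2) + (finrank (ZMod 2) Qs + finrank (ZMod 2) T))) := by
      rw [← hrange, LinearMap.finrank_range_of_inj hinj, Module.finrank_prod,
        Module.finrank_prod, Module.finrank_prod, Module.finrank_prod, hk1, hk2, hPdim]
    rw [hfin]
    omega
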